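/- For every ε ∈ (0, 1/4) and every t ≤ −1, one has σ_{ε,t}(s) = s for all s ≥ t + 1. -/

import Mathlib

open MeasureTheory
open Set
open scoped Convolution

/-- For every `ε ∈ (0, 1/4)` and every `t ≤ −1`, one has `σ_{ε,t}(s) = s` for all
`s ≥ t + 1`. -/
theorem stmt_13 (ε t : ℝ) (hε : ε ∈ Set.Ioo (0 : ℝ) (1 / 4)) (ht : t ≤ -1)
    (θ ρ ρε k σ : ℝ → ℝ)
    (hθ : ∀ u, θ u = if |u| < 1 then Real.exp (1 / (u ^ 2 - 1)) else 0)
    (hρ : ∀ u, ρ u = θ u / ∫ x, θ x)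
    (hρε : ∀ u, ρε u = (4 / ε) * ρ (4 * u / ε))
    (hk : ∀ x, k x = (1 / (1 - 2 * ε)) *
      ∫ y, Set.indicator (Set.Ioo (t + ε) (t + 1 - ε)) (fun _ => (1 : ℝ)) y *
        ρε (x - y))
    (hσ : ∀ s, σ s =
      (∫ t₂ in Set.Iic s, ∫ t₁ in Set.Iic t₂, k t₁) -
        ∫ t₂ in Set.Iic (0 : ℝ), ∫ t₁ in Set.Iic t₂, k t₁) :
    ∀ s ≥ t + 1, σ s = s := by
  obtain ⟨hε0, hε4⟩ := hε
  have hε2 : (0:ℝ) < 1 - 2*ε := by linarith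
  -- θ facts
  have hθ_eq : θ = Set.indicator (Set.Ioo (-1:ℝ) 1) (fun u => Real.exp (1/(u^2-1))) := by
    funext u
    by_cases h : |u| < 1
    · rw [hθ, if_pos h, Set.indicator_of_mem (Set.mem_Ioo.mpr (abs_lt.mp h))]
    · rw [hθ, if_neg h,
        Set.indicator_of_notMem (fun hm => h (abs_lt.mpr (Set.mem_Ioo.mp hm)))]
  have hinner_meas : Measurable (fun u : ℝ => Real.exp (1/(u^2-1))) :=
    Real.measurable_exp.comp
      (measurable_const.div ((measurable_id.pow_const 2).sub measurable_const))
  have hθ_meas : Measurable θ := by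
    rw [hθ_eq]
    exact (Measurable.indicator hinner_meas measurableSet_Ioo)
  have hθ_nn : ∀ u, 0 ≤ θ u := fun u => by
    rw [hθ]; split
    · exact (Real.exp_pos _).le
    · exact le_rfl
  have hθ_int : Integrable θ := by
    rw [hθ_eq, integrable_indicator_iff measurableSet_Ioo]
    apply Measure.integrableOn_of_bounded (M := 1) (measure_Ioo_lt_top).ne hinner_meas.aestronglyMeasurable
    filter_upwards [ae_restrict_mem measurableSet_Ioo] with u hu
    rw [Real.norm_eq_abs, abs_of_nonneg (Real.exp_pos _).le]
    have h1 : u^2 - 1 < 0 := by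
      rcases Set.mem_Ioo.mp hu with ⟨h1, h2⟩; nlinarith
    calc Real.exp (1/(u^2-1)) ≤ Real.exp 0 :=
          Real.exp_le_exp.mpr (le_of_lt (div_neg_of_pos_of_neg one_pos h1))
      _ = 1 := Real.exp_zero
  have hI_pos : 0 < ∫ x, θ x := by
    rw [integral_pos_iff_support_of_nonneg hθ_nn hθ_int]
    have hsub : Set.Ioo (-1:ℝ) 1 ⊆ Function.support θ := fun u hu => by
      rw [Function.mem_support, hθ, if_pos (abs_lt.mpr (Set.mem_Ioo.mp hu))]
      exact (Real.exp_pos _).ne'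
    calc (0 : ENNReal) < volume (Set.Ioo (-1:ℝ) 1) := by
          rw [Real.volume_Ioo]; exact ENNReal.ofReal_pos.mpr (by norm_num)
      _ ≤ _ := measure_mono hsub
  -- ρ facts
  have hρ_fun : ρ = fun u => θ u / (∫ x, θ x) := funext hρ
  have hρ_int : Integrable ρ := by rw [hρ_fun]; exact hθ_int.div_const _
  have hρ_total : ∫ u, ρ u = 1 := by
    rw [hρ_fun, integral_div]; exact div_self hI_pos.ne'
  have hρ_nn : ∀ u, 0 ≤ ρ u := fun u => by
    rw [hρ]; exact div_nonneg (hθ_nn u) hI_pos.le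
  have hρ_supp : ∀ u : ℝ, 1 ≤ |u| → ρ u = 0 := fun u hu => by
    rw [hρ, hθ, if_neg (not_lt.mpr hu), zero_div]
  -- ρε facts
  have hmul : ∀ u : ℝ, 4*u/ε = (4/ε)*u := fun u => by ring
  have hρε_int : Integrable ρε := by
    have h1 : Integrable (fun u => (4/ε) * ρ ((4/ε)*u)) :=
      (hρ_int.comp_mul_left' (by positivity)).const_mul _
    exact h1.congr (Filter.Eventually.of_forall fun u => by
      show 4 / ε * ρ (4 / ε * u) = ρε u
      rw [hρε u, hmul u])
  have hρε_total : ∫ u, ρε u = 1 := by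
    have h1 : ∫ u, ρε u = (4/ε) * ∫ u, ρ ((4/ε)*u) := by
      simp_rw [hρε, hmul, integral_const_mul]
    rw [h1, Measure.integral_comp_mul_left ρ (4/ε), hρ_total, smul_eq_mul]
    rw [abs_of_pos (by positivity : (0:ℝ) < (4/ε)⁻¹)]
    field_simp
  have hρε_nn : ∀ u, 0 ≤ ρε u := fun u => by
    rw [hρε]; exact mul_nonneg (by positivity) (hρ_nn _)
  have hρε_supp : ∀ u : ℝ, ε/4 ≤ |u| → ρε u = 0 := fun u hu => by
    rw [hρε, hρ_supp _ ?_, mul_zero]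
    rw [abs_div, abs_of_pos hε0, abs_mul, le_div_iff₀ hε0]
    have : |(4:ℝ)| = 4 := by norm_num
    rw [this]; linarith
  -- k facts
  set L : ℝ →L[ℝ] ℝ →L[ℝ] ℝ := ContinuousLinearMap.mul ℝ ℝ with hL
  set f : ℝ → ℝ := Set.indicator (Set.Ioo (t+ε) (t+1-ε)) (fun _ => (1:ℝ)) with hf
  have hf_int : Integrable f := by
    rw [hf, integrable_indicator_iff measurableSet_Ioo]
    exact integrableOn_const measure_Ioo_lt_top.ne
  have hf_total : ∫ x, f x = 1 - 2*ε := by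
    rw [hf, integral_indicator measurableSet_Ioo, setIntegral_const, Real.volume_real_Ioo_of_le (by linarith),
      smul_eq_mul, mul_one]
    ring
  have hk_fun : k = fun x => (1/(1-2*ε)) * ((f ⋆[L, volume] ρε) x) := by
    funext x
    rw [hk, convolution_def]
    simp only [hL, ContinuousLinearMap.mul_apply']
  have hk_int : Integrable k := by
    rw [hk_fun]; exact (Integrable.integrable_convolution L hf_int hρε_int).const_mul _
  have hk_total : ∫ x, k x = 1 := by
    rw [hk_fun, integral_const_mul, integral_convolution (L := L) hf_int hρε_int, hf_total, hρε_total]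
    simp only [hL, ContinuousLinearMap.mul_apply', mul_one]
    field_simp
  have hk_nn : ∀ x, 0 ≤ k x := fun x => by
    rw [hk]
    refine mul_nonneg (by positivity) (integral_nonneg fun y => mul_nonneg ?_ (hρε_nn _))
    exact Set.indicator_nonneg (fun _ _ => zero_le_one) y
  have hk_hi : ∀ x : ℝ, t + 1 - ε + ε/4 ≤ x → k x = 0 := by
    intro x hx
    rw [hk]
    have : ∀ y : ℝ, f y * ρε (x - y) = 0 := by
      intro y
      by_cases hy : y ∈ Set.Ioo (t+ε) (t+1-ε)
      · rw [hρε_supp (x - y) ?_, mul_zero]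
        rw [abs_of_nonneg (by linarith [hy.2] : (0:ℝ) ≤ x - y)]
        linarith [hy.2]
      · rw [hf, Set.indicator_of_notMem hy, zero_mul]
    rw [show (fun y => f y * ρε (x - y)) = fun _ => (0:ℝ) from funext this] at *
    rw [integral_zero, mul_zero]
  have hk_lo : ∀ x : ℝ, x ≤ t + 3*ε/4 → k x = 0 := by
    intro x hx
    rw [hk]
    have : ∀ y : ℝ, f y * ρε (x - y) = 0 := by
      intro y
      by_cases hy : y ∈ Set.Ioo (t+ε) (t+1-ε)
      · rw [hρε_supp (x - y) ?_, mul_zero]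
        rw [abs_sub_comm, abs_of_nonneg (by linarith [hy.1] : (0:ℝ) ≤ y - x)]
        linarith [hy.1]
      · rw [hf, Set.indicator_of_notMem hy, zero_mul]
    rw [show (fun y => f y * ρε (x - y)) = fun _ => (0:ℝ) from funext this] at *
    rw [integral_zero, mul_zero]
  -- F facts
  set F : ℝ → ℝ := fun τ => ∫ t₁ in Set.Iic τ, k t₁ with hF
  have hF_one : ∀ τ : ℝ, t + 1 ≤ τ → F τ = 1 := by
    intro τ hτ
    show ∫ t₁ in Set.Iic τ, k t₁ = 1
    rw [setIntegral_eq_integral_of_forall_compl_eq_zero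
      (fun x hx => hk_hi x (by simp only [Set.mem_Iic, not_le] at hx; linarith))]
    exact hk_total
  have hF_zero : ∀ τ : ℝ, τ ≤ t + 3*ε/4 → F τ = 0 := by
    intro τ hτ
    show ∫ t₁ in Set.Iic τ, k t₁ = 0
    rw [setIntegral_congr_fun measurableSet_Iic
      (fun x (hx : x ∈ Set.Iic τ) => hk_lo x (le_trans hx hτ) : Set.EqOn k 0 (Set.Iic τ))]
    simp
  have hF_mono : Monotone F := fun τ₁ τ₂ h =>
    setIntegral_mono_set hk_int.integrableOn (Filter.Eventually.of_forall hk_nn)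
      (HasSubset.Subset.eventuallyLE (Set.Iic_subset_Iic.mpr h))
  have hF_nn : ∀ τ, 0 ≤ F τ := fun τ =>
    setIntegral_nonneg measurableSet_Iic fun x _ => hk_nn x
  have hF_le : ∀ τ, F τ ≤ 1 := fun τ =>
    le_of_le_of_eq (setIntegral_le_integral hk_int (Filter.Eventually.of_forall hk_nn)) hk_total
  have hF_intOn : ∀ r : ℝ, t + 1 ≤ r → IntegrableOn F (Set.Iic r) := by
    intro r hr
    have h34 : t + 3*ε/4 ≤ r := by linarith
    rw [← Set.Iic_union_Ioc_eq_Iic h34, integrableOn_union]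
    constructor
    · exact (integrableOn_zero).congr_fun
        (fun x hx => (hF_zero x hx).symm) measurableSet_Iic
    · apply Measure.integrableOn_of_bounded (M := 1) measure_Ioc_lt_top.ne
        hF_mono.measurable.aestronglyMeasurable
      exact Filter.Eventually.of_forall fun x => by
        rw [Real.norm_eq_abs, abs_of_nonneg (hF_nn x)]; exact hF_le x
  -- conclusion
  intro s hs
  have ht1 : t + 1 ≤ 0 := by linarith
  have hσs : σ s = (∫ t₂ in Set.Iic s, F t₂) - ∫ t₂ in Set.Iic (0:ℝ), F t₂ := hσ s
  rcases le_or_gt 0 s with h0s | h0s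
  · have hsplit : ∫ t₂ in Set.Iic s, F t₂ =
        (∫ t₂ in Set.Iic (0:ℝ), F t₂) + ∫ t₂ in Set.Ioc (0:ℝ) s, F t₂ := by
      rw [← setIntegral_union (Set.Iic_disjoint_Ioc le_rfl) measurableSet_Ioc
        (hF_intOn 0 ht1) (((hF_intOn s hs)).mono_set Set.Ioc_subset_Iic_self),
        Set.Iic_union_Ioc_eq_Iic h0s]
    have hconst : ∫ t₂ in Set.Ioc (0:ℝ) s, F t₂ = s := by
      rw [setIntegral_congr_fun measurableSet_Ioc
        (fun x (hx : x ∈ Set.Ioc (0:ℝ) s) => hF_one x (by linarith [hx.1]))]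
      rw [setIntegral_const, Real.volume_real_Ioc_of_le (by linarith), smul_eq_mul, mul_one]
      ring
    rw [hσs, hsplit, hconst]; ring
  · have hsplit : ∫ t₂ in Set.Iic (0:ℝ), F t₂ =
        (∫ t₂ in Set.Iic s, F t₂) + ∫ t₂ in Set.Ioc s (0:ℝ), F t₂ := by
      rw [← setIntegral_union (Set.Iic_disjoint_Ioc le_rfl) measurableSet_Ioc
        (hF_intOn s hs) (((hF_intOn 0 ht1)).mono_set Set.Ioc_subset_Iic_self),
        Set.Iic_union_Ioc_eq_Iic h0s.le]
    have hconst : ∫ t₂ in Set.Ioc s (0:ℝ), F t₂ = -s := by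
      rw [setIntegral_congr_fun measurableSet_Ioc
        (fun x (hx : x ∈ Set.Ioc s (0:ℝ)) => hF_one x (by linarith [hx.1]))]
      rw [setIntegral_const, Real.volume_real_Ioc_of_le (by linarith), smul_eq_mul, mul_one]
      ring
    rw [hσs, hsplit, hconst]; ring
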